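/- (Brier improvement from patching with a rounded offset.) Let f : 𝒳 → [0,1]^d be a predictor, E ⊆ 𝒳 a measurable event with μ(E) > 0 under distribution D, let φ = E_{(x,y)∼D}[y − f(x) | E], and let φ̃ ∈ ℝ^d satisfy |φ̃_j − φ_j| ≤ 1/(2m) for every coordinate j ∈ [d], where m is a positive integer. Define f'(x) = proj_{[0,1]^d}(f(x) + φ̃·1_E(x)). Then B(f, D) − B(f', D) ≥ ‖φ‖₂² · μ(E) − d/(4m²). -/

import Mathlib

open MeasureTheory

/-- The Euclidean projection onto the cube `[0,1]^d` (coordinatewise clamping). -/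
noncomputable def projCube {d : ℕ} (v : EuclideanSpace ℝ (Fin d)) :
    EuclideanSpace ℝ (Fin d) :=
  WithLp.toLp 2 (fun j => min 1 (max 0 (v j)))

lemma euclid_normsq {d : ℕ} (w : EuclideanSpace ℝ (Fin d)) : ‖w‖^2 = ∑ j, (w j)^2 := by
  rw [EuclideanSpace.norm_sq_eq]
  simp [Real.norm_eq_abs, sq_abs]

lemma clamp_sq_le {v y : ℝ} (h0 : 0 ≤ y) (h1 : y ≤ 1) :
    (min 1 (max 0 v) - y)^2 ≤ (v - y)^2 := by
  rcases le_total v 0 with h|h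
  · rw [max_eq_left h, min_eq_right (by norm_num : (0:ℝ) ≤ 1)]; nlinarith
  · rw [max_eq_right h]
    rcases le_total 1 v with h2|h2
    · rw [min_eq_left h2]; nlinarith
    · rw [min_eq_right h2]

lemma projCube_contract {d : ℕ} (v y : EuclideanSpace ℝ (Fin d))
    (hy : ∀ j, y j ∈ Set.Icc (0:ℝ) 1) : ‖projCube v - y‖^2 ≤ ‖v - y‖^2 := by
  rw [euclid_normsq, euclid_normsq]
  apply Finset.sum_le_sum
  intro j _
  simp only [PiLp.sub_apply, projCube, PiLp.toLp_apply]
  exact clamp_sq_le (hy j).1 (hy j).2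

lemma projCube_eq_self {d : ℕ} (v : EuclideanSpace ℝ (Fin d))
    (hv : ∀ j, v j ∈ Set.Icc (0:ℝ) 1) : projCube v = v := by
  ext j
  simp only [projCube, PiLp.toLp_apply]
  rw [max_eq_right (hv j).1, min_eq_right (hv j).2]

lemma projCube_mem {d : ℕ} (v : EuclideanSpace ℝ (Fin d)) (j : Fin d) :
    projCube v j ∈ Set.Icc (0:ℝ) 1 := by
  simp only [projCube, PiLp.toLp_apply]
  exact ⟨le_min (by norm_num) (le_max_left 0 _), min_le_left _ _⟩

lemma projCube_measurable {d : ℕ} : Measurable (projCube (d := d)) := by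
  apply Continuous.measurable
  unfold projCube
  exact (PiLp.continuous_toLp 2 _).comp (continuous_pi fun j =>
    continuous_const.min (continuous_const.max ((continuous_apply j).comp (PiLp.continuous_ofLp 2 _))))

/-- Brier improvement from patching with a rounded offset.  Patching a
predictor `f` on an event `E` of positive mass by a vector `φ̃` within `1/(2m)` of the
conditional mean residual `φ = E[y - f(x) | E]` in every coordinate (and projecting back
to the cube) decreases the Brier score by at least `‖φ‖₂²·μ(E) - d/(4m²)`. -/
theorem brier_improvement_from_rounded_patching
    {X : Type*} [MeasurableSpace X] {d : ℕ}
    (D : Measure (X × EuclideanSpace ℝ (Fin d))) [IsProbabilityMeasure D]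
    (hY : ∀ᵐ p ∂D, ∀ j, p.2 j ∈ Set.Icc (0 : ℝ) 1)
    (f : X → EuclideanSpace ℝ (Fin d)) (hf_meas : Measurable f)
    (hf_range : ∀ x j, f x j ∈ Set.Icc (0 : ℝ) 1)
    (E : Set X) (hE_meas : MeasurableSet E) (hμE : 0 < (D.map Prod.fst) E)
    (φ : EuclideanSpace ℝ (Fin d))
    (hφ : φ = ((D.map Prod.fst) E).toReal⁻¹ •
      ∫ p in Prod.fst ⁻¹' E, (p.2 - f p.1) ∂D)
    (m : ℕ) (hm : 0 < m)
    (φt : EuclideanSpace ℝ (Fin d))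
    (hφt : ∀ j, |φt j - φ j| ≤ 1 / (2 * m))
    (f' : X → EuclideanSpace ℝ (Fin d))
    (hf' : ∀ x, f' x = projCube (f x + Set.indicator E (fun _ => φt) x)) :
    (∫ p, ‖f p.1 - p.2‖ ^ 2 ∂D) - (∫ p, ‖f' p.1 - p.2‖ ^ 2 ∂D)
      ≥ ‖φ‖ ^ 2 * ((D.map Prod.fst) E).toReal - d / (4 * m ^ 2) := by
  set S : Set (X × EuclideanSpace ℝ (Fin d)) := Prod.fst ⁻¹' E with hSdef
  have hS : MeasurableSet S := measurable_fst hE_meas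
  have hDS : (D.map Prod.fst) E = D S := Measure.map_apply measurable_fst hE_meas
  set a : ℝ := ((D.map Prod.fst) E).toReal with ha
  have haS : (D S).toReal = a := by rw [ha, hDS]
  have ha_pos : 0 < a := ENNReal.toReal_pos hμE.ne' (by rw [hDS]; exact measure_ne_top D S)
  have ha_le : a ≤ 1 := by
    rw [ha, hDS]
    simpa using ENNReal.toReal_mono ENNReal.one_ne_top (prob_le_one : D S ≤ 1)
  have hf'_meas : Measurable f' := by
    have hfe : f' = fun x => projCube (f x + Set.indicator E (fun _ => φt) x) := funext hf'
    rw [hfe]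
    exact projCube_measurable.comp (hf_meas.add (measurable_const.indicator hE_meas))
  have hf'_range : ∀ x j, f' x j ∈ Set.Icc (0:ℝ) 1 := fun x j => by
    rw [hf' x]; exact projCube_mem _ j
  have hnorm_bound : ∀ (u w : EuclideanSpace ℝ (Fin d)), (∀ j, u j ∈ Set.Icc (0:ℝ) 1) →
      (∀ j, w j ∈ Set.Icc (0:ℝ) 1) → ‖u - w‖^2 ≤ d := by
    intro u w hu hw
    rw [euclid_normsq]
    calc (∑ j, ((u - w) j)^2) ≤ ∑ _j : Fin d, (1:ℝ) := by
          apply Finset.sum_le_sum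
          intro j _
          have h1 := hu j; have h2 := hw j
          have he : (u - w) j = u j - w j := rfl
          rw [he]
          nlinarith [h1.1, h1.2, h2.1, h2.2]
      _ = d := by simp
  have hsqrt : ∀ (u w : EuclideanSpace ℝ (Fin d)), (∀ j, u j ∈ Set.Icc (0:ℝ) 1) →
      (∀ j, w j ∈ Set.Icc (0:ℝ) 1) → ‖u - w‖ ≤ Real.sqrt d := by
    intro u w hu hw
    have h2 := hnorm_bound u w hu hw
    nlinarith [Real.sq_sqrt (by positivity : (0:ℝ) ≤ (d:ℝ)), Real.sqrt_nonneg (d:ℝ),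
      norm_nonneg (u - w)]
  -- integrability
  have hI1 : Integrable (fun p : X × EuclideanSpace ℝ (Fin d) => ‖f p.1 - p.2‖^2) D := by
    apply Integrable.mono' (integrable_const (d:ℝ))
      (((hf_meas.comp measurable_fst).sub measurable_snd).norm.pow_const 2).aestronglyMeasurable
    filter_upwards [hY] with p hp
    rw [Real.norm_eq_abs, abs_of_nonneg (by positivity)]
    exact hnorm_bound _ _ (fun j => hf_range p.1 j) hp
  have hI2 : Integrable (fun p : X × EuclideanSpace ℝ (Fin d) => ‖f' p.1 - p.2‖^2) D := by
    apply Integrable.mono' (integrable_const (d:ℝ))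
      (((hf'_meas.comp measurable_fst).sub measurable_snd).norm.pow_const 2).aestronglyMeasurable
    filter_upwards [hY] with p hp
    rw [Real.norm_eq_abs, abs_of_nonneg (by positivity)]
    exact hnorm_bound _ _ (fun j => hf'_range p.1 j) hp
  have hI3 : IntegrableOn (fun p : X × EuclideanSpace ℝ (Fin d) => p.2 - f p.1) S D := by
    apply Integrable.integrableOn
    apply Integrable.mono' (integrable_const (Real.sqrt d))
      ((measurable_snd.sub (hf_meas.comp measurable_fst)).aestronglyMeasurable)
    filter_upwards [hY] with p hp
    exact hsqrt _ _ hp (fun j => hf_range p.1 j)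
  have hIi : Integrable (fun p : X × EuclideanSpace ℝ (Fin d) =>
      (inner ℝ (p.2 - f p.1) φt : ℝ)) D := by
    apply Integrable.mono' (integrable_const (Real.sqrt d * ‖φt‖))
      (((measurable_snd.sub (hf_meas.comp measurable_fst)).inner
        measurable_const).aestronglyMeasurable)
    filter_upwards [hY] with p hp
    have h3 : ‖p.2 - f p.1‖ ≤ Real.sqrt d := hsqrt _ _ hp (fun j => hf_range p.1 j)
    have h4 : |(inner ℝ (p.2 - f p.1) φt : ℝ)| ≤ ‖p.2 - f p.1‖ * ‖φt‖ :=
      abs_real_inner_le_norm _ _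
    rw [Real.norm_eq_abs]
    calc |(inner ℝ (p.2 - f p.1) φt : ℝ)| ≤ ‖p.2 - f p.1‖ * ‖φt‖ := h4
      _ ≤ Real.sqrt d * ‖φt‖ := mul_le_mul_of_nonneg_right h3 (norm_nonneg _)
  have hIh : Integrable (fun p : X × EuclideanSpace ℝ (Fin d) =>
      2 * (inner ℝ (p.2 - f p.1) φt : ℝ) - ‖φt‖^2) D :=
    (hIi.const_mul 2).sub (integrable_const _)
  have hIg : Integrable (S.indicator (fun p => 2 * (inner ℝ (p.2 - f p.1) φt : ℝ) - ‖φt‖^2)) D :=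
    hIh.indicator hS
  -- pointwise
  have hpoint : ∀ᵐ p ∂D, S.indicator
      (fun p => 2 * (inner ℝ (p.2 - f p.1) φt : ℝ) - ‖φt‖^2) p
      ≤ ‖f p.1 - p.2‖^2 - ‖f' p.1 - p.2‖^2 := by
    filter_upwards [hY] with p hp
    by_cases hpE : p.1 ∈ E
    · rw [Set.indicator_of_mem (show p ∈ S from hpE)]
      have hfe : f' p.1 = projCube (f p.1 + φt) := by
        rw [hf' p.1, Set.indicator_of_mem hpE]
      have hc : ‖f' p.1 - p.2‖^2 ≤ ‖(f p.1 + φt) - p.2‖^2 := by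
        rw [hfe]; exact projCube_contract _ _ hp
      have hexp : ‖(f p.1 + φt) - p.2‖^2
          = ‖f p.1 - p.2‖^2 + 2 * (inner ℝ (f p.1 - p.2) φt : ℝ) + ‖φt‖^2 := by
        rw [add_sub_right_comm]
        exact norm_add_sq_real _ _
      have hi : (inner ℝ (p.2 - f p.1) φt : ℝ) = -(inner ℝ (f p.1 - p.2) φt : ℝ) := by
        rw [← inner_neg_left, neg_sub]
      rw [hi]; linarith
    · rw [Set.indicator_of_notMem (show p ∉ S from hpE)]
      have hfe : f' p.1 = f p.1 := by
        rw [hf' p.1, Set.indicator_of_notMem hpE, add_zero,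
          projCube_eq_self _ (fun j => hf_range p.1 j)]
      rw [hfe]; linarith
  have hmono : ∫ p, S.indicator
      (fun p => 2 * (inner ℝ (p.2 - f p.1) φt : ℝ) - ‖φt‖^2) p ∂D
      ≤ ∫ p, (‖f p.1 - p.2‖^2 - ‖f' p.1 - p.2‖^2) ∂D :=
    integral_mono_ae hIg (hI1.sub hI2) hpoint
  -- value of the indicator integral
  have hint : ∫ p in S, (p.2 - f p.1) ∂D = a • φ := by
    rw [hφ, smul_smul, ← haS, mul_inv_cancel₀ (by rw [haS]; exact ha_pos.ne'), one_smul]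
  have h1 : ∫ p in S, (inner ℝ (p.2 - f p.1) φt : ℝ) ∂D = a * (inner ℝ φt φ : ℝ) := by
    have e1 : ∫ p in S, (inner ℝ (p.2 - f p.1) φt : ℝ) ∂D
        = ∫ p in S, (inner ℝ φt (p.2 - f p.1) : ℝ) ∂D := by
      apply integral_congr_ae
      filter_upwards with p
      exact real_inner_comm _ _
    rw [e1, integral_inner hI3 φt, hint, real_inner_smul_right]
  have hval : ∫ p, S.indicator
      (fun p => 2 * (inner ℝ (p.2 - f p.1) φt : ℝ) - ‖φt‖^2) p ∂D
      = 2 * (a * (inner ℝ φt φ : ℝ)) - ‖φt‖^2 * a := by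
    rw [integral_indicator hS]
    rw [integral_sub ((hIi.const_mul 2).integrableOn)
      (integrableOn_const (measure_ne_top D S))]
    rw [integral_const_mul, h1, setIntegral_const, measureReal_def, haS, smul_eq_mul]
    ring
  -- distance bound
  have hm' : (m:ℝ) ≠ 0 := Nat.cast_ne_zero.mpr hm.ne'
  have hdist : ‖φt - φ‖^2 ≤ d / (4 * m^2) := by
    rw [euclid_normsq]
    calc (∑ j, ((φt - φ) j)^2) ≤ ∑ _j : Fin d, (1/(2*(m:ℝ)))^2 := by
          apply Finset.sum_le_sum
          intro j _
          have h := hφt j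
          have he : (φt - φ) j = φt j - φ j := rfl
          rw [he]
          exact sq_le_sq' (by linarith [(abs_le.mp h).1]) (abs_le.mp h).2
      _ = d * (1/(2*(m:ℝ)))^2 := by
          rw [Finset.sum_const, Finset.card_univ, Fintype.card_fin, nsmul_eq_mul]
      _ = d / (4 * m^2) := by
          rw [div_pow, one_pow, (by ring : ((2:ℝ)*(m:ℝ))^2 = 4*(m:ℝ)^2), mul_one_div]
  -- final algebra
  have hid : ‖φt - φ‖^2 = ‖φt‖^2 - 2*(inner ℝ φt φ : ℝ) + ‖φ‖^2 := norm_sub_sq_real φt φ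
  have hid2 : a*(2*(inner ℝ φt φ : ℝ) - ‖φt‖^2) = a*‖φ‖^2 - a*‖φt - φ‖^2 := by
    rw [hid]; ring
  have key : a*‖φt - φ‖^2 ≤ (d:ℝ) / (4 * m^2) := by
    nlinarith [mul_nonneg (by linarith : (0:ℝ) ≤ 1 - a) (sq_nonneg ‖φt - φ‖)]
  rw [ge_iff_le]
  calc ‖φ‖^2 * a - (d:ℝ)/(4*m^2)
      ≤ 2 * (a * (inner ℝ φt φ : ℝ)) - ‖φt‖^2 * a := by nlinarith [hid2, key]
    _ = ∫ p, S.indicator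
        (fun p => 2 * (inner ℝ (p.2 - f p.1) φt : ℝ) - ‖φt‖^2) p ∂D := hval.symm
    _ ≤ ∫ p, (‖f p.1 - p.2‖^2 - ‖f' p.1 - p.2‖^2) ∂D := hmono
    _ = (∫ p, ‖f p.1 - p.2‖ ^ 2 ∂D) - (∫ p, ‖f' p.1 - p.2‖ ^ 2 ∂D) := integral_sub hI1 hI2
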